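/- Fix t > 0, a < b, u_a < 0 < u_b, and x with b < x. For ε > 0 set A_ε = (x-a)/√(2tε), B_ε = (x-b)/√(2tε). Then the quotient ((x-a)/(2t))·[((e^{u_a/ε}−1)/(A_ε e^{A_ε² − u_b/ε})) + ((x-b)/(x-a))·((1 − e^{-u_b/ε})/(B_ε e^{B_ε² − u_b/ε}))] divided by [√π + erfc(A_ε) e^{u_b/ε}(e^{u_a/ε} − 1) + erfc(B_ε) e^{u_b/ε}(1 − e^{-u_b/ε})] tends, as ε → 0⁺, to (x−b)/t when b < x < b + √(2 u_b t), and to 0 when x > b + √(2 u_b t). -/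

import Mathlib

open MeasureTheory Filter Real Set Topology

noncomputable def erfc (z : ℝ) : ℝ := ∫ s in Set.Ioi z, Real.exp (-s^2)

lemma int_exp : MeasureTheory.Integrable (fun s : ℝ => Real.exp (-s^2)) := by
  have := integrable_exp_neg_mul_sq (b := 1) one_pos
  simpa using this

lemma intOn_exp (z : ℝ) : IntegrableOn (fun s : ℝ => Real.exp (-s^2)) (Ioi z) :=
  int_exp.integrableOn

lemma hasDeriv_aux {s : ℝ} (hs : s ≠ 0) :
    HasDerivAt (fun s : ℝ => -(Real.exp (-s^2) / (2*s)))
      (Real.exp (-s^2) + Real.exp (-s^2)/(2*s^2)) s := by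
  have hg : HasDerivAt (fun s : ℝ => Real.exp (-s^2)) (Real.exp (-s^2) * (-(2*s))) s := by
    have h1 : HasDerivAt (fun s : ℝ => -s^2) (-(2*s)) s := by
      simpa using (hasDerivAt_pow 2 s).fun_neg
    exact (Real.hasDerivAt_exp _).comp s h1
  have hh : HasDerivAt (fun s : ℝ => 2*s) 2 s := by
    simpa using (hasDerivAt_id s).const_mul (2:ℝ)
  have h2s : (2:ℝ)*s ≠ 0 := by simp [hs]
  have := (hg.fun_div hh h2s).fun_neg
  refine this.congr_deriv ?_
  field_simp
  ring

-- the integrand of f' is measurable & integrable on Ioi z, z > 0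
lemma intOn_aux {z : ℝ} (hz : 0 < z) :
    IntegrableOn (fun s : ℝ => Real.exp (-s^2)/(2*s^2)) (Ioi z) := by
  refine Integrable.mono' ((intOn_exp z).const_mul (1/(2*z^2)))
    ?_ ?_
  · refine (ContinuousOn.aestronglyMeasurable ?_ measurableSet_Ioi)
    refine ContinuousOn.div (by fun_prop) (by fun_prop) ?_
    intro s hs; have h : z < s := mem_Ioi.mp hs
    have h2 : (0:ℝ) < 2*s^2 := by nlinarith
    exact h2.ne'
  · filter_upwards [ae_restrict_mem measurableSet_Ioi] with s hs
    have hzs : z < s := mem_Ioi.mp hs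
    rw [Real.norm_eq_abs, abs_of_nonneg (by positivity)]
    have h2 : (0:ℝ) < s := hz.trans hzs
    calc Real.exp (-s^2)/(2*s^2) ≤ Real.exp (-s^2)/(2*z^2) :=
          div_le_div_of_nonneg_left (Real.exp_pos _).le (by positivity) (by nlinarith)
      _ = 1/(2*z^2) * Real.exp (-s^2) := by ring

lemma parts_identity {z : ℝ} (hz : 0 < z) :
    erfc z + ∫ s in Ioi z, Real.exp (-s^2)/(2*s^2) = Real.exp (-z^2)/(2*z) := by
  have hint : IntegrableOn (fun s : ℝ => Real.exp (-s^2) + Real.exp (-s^2)/(2*s^2)) (Ioi z) :=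
    (intOn_exp z).add (intOn_aux hz)
  have hderiv : ∀ s ∈ Ici z, HasDerivAt (fun s : ℝ => -(Real.exp (-s^2) / (2*s)))
      (Real.exp (-s^2) + Real.exp (-s^2)/(2*s^2)) s := by
    intro s hs
    exact hasDeriv_aux (hz.trans_le (mem_Ici.mp hs)).ne'
  have htend : Tendsto (fun s : ℝ => -(Real.exp (-s^2) / (2*s))) atTop (𝓝 0) := by
    rw [show (0:ℝ) = -0 by norm_num]
    refine Tendsto.neg (Tendsto.div_atTop (a := 0) ?_ ?_)
    · refine Real.tendsto_exp_atBot.comp ?_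
      exact tendsto_neg_atBot_iff.mpr (tendsto_pow_atTop two_ne_zero)
    · exact tendsto_id.const_mul_atTop (by norm_num : (0:ℝ) < 2)
  have := integral_Ioi_of_hasDerivAt_of_tendsto' hderiv hint htend
  rw [MeasureTheory.integral_add (intOn_exp z) (intOn_aux hz)] at this
  rw [erfc]
  linarith [this]

lemma J_nonneg {z : ℝ} (hz : 0 < z) : 0 ≤ ∫ s in Ioi z, Real.exp (-s^2)/(2*s^2) :=
  setIntegral_nonneg measurableSet_Ioi (fun s _ => by positivity)

lemma erfc_nonneg (z : ℝ) : 0 ≤ erfc z :=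
  setIntegral_nonneg measurableSet_Ioi (fun s _ => (Real.exp_pos _).le)

lemma erfc_le {z : ℝ} (hz : 0 < z) : erfc z ≤ Real.exp (-z^2)/(2*z) := by
  have := parts_identity hz; linarith [J_nonneg hz]

lemma le_erfc {z : ℝ} (hz : 0 < z) :
    Real.exp (-z^2)/(2*z) - Real.exp (-z^2)/(4*z^3) ≤ erfc z := by
  have hJ : (∫ s in Ioi z, Real.exp (-s^2)/(2*s^2)) ≤ ∫ s in Ioi z, 1/(2*z^2) * Real.exp (-s^2) := by
    apply setIntegral_mono_on (intOn_aux hz) ((intOn_exp z).const_mul _) measurableSet_Ioi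
    intro s hs
    have hzs : z < s := mem_Ioi.mp hs
    have h2 : (0:ℝ) < s := hz.trans hzs
    calc Real.exp (-s^2)/(2*s^2) ≤ Real.exp (-s^2)/(2*z^2) :=
          div_le_div_of_nonneg_left (Real.exp_pos _).le (by positivity) (by nlinarith)
      _ = 1/(2*z^2) * Real.exp (-s^2) := by ring
  rw [MeasureTheory.integral_const_mul] at hJ
  have hid := parts_identity hz
  have h1 : 1/(2*z^2) * (∫ s in Ioi z, Real.exp (-s^2)) ≤ 1/(2*z^2) * (Real.exp (-z^2)/(2*z)) :=
    mul_le_mul_of_nonneg_left (erfc_le hz) (by positivity)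
  have h2 : 1/(2*z^2) * (Real.exp (-z^2)/(2*z)) = Real.exp (-z^2)/(4*z^3) := by ring
  rw [erfc] at *
  linarith

lemma erfc_asymp : Tendsto (fun z : ℝ => z * erfc z * Real.exp (z^2)) atTop (𝓝 (1/2 : ℝ)) := by
  have hlow : Tendsto (fun z : ℝ => 1/2 - 1/(4*z^2)) atTop (𝓝 (1/2 : ℝ)) := by
    have h2 : Tendsto (fun z : ℝ => 1/(4*z^2)) atTop (𝓝 0) := by
      apply Tendsto.div_atTop (a := 1) tendsto_const_nhds
      exact (tendsto_pow_atTop two_ne_zero).const_mul_atTop (by norm_num)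
    simpa using tendsto_const_nhds.sub h2
  apply tendsto_of_tendsto_of_tendsto_of_le_of_le' hlow tendsto_const_nhds
  · filter_upwards [eventually_gt_atTop (0:ℝ)] with z hz
    have key : z * (Real.exp (-z^2)/(2*z) - Real.exp (-z^2)/(4*z^3)) * Real.exp (z^2)
        = 1/2 - 1/(4*z^2) := by
      rw [Real.exp_neg]
      have := (Real.exp_pos (z^2)).ne'
      field_simp
    calc 1/2 - 1/(4*z^2) = z * (Real.exp (-z^2)/(2*z) - Real.exp (-z^2)/(4*z^3)) * Real.exp (z^2) :=
          key.symm
      _ ≤ z * erfc z * Real.exp (z^2) := by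
          have h := le_erfc hz
          gcongr
  · filter_upwards [eventually_gt_atTop (0:ℝ)] with z hz
    have key : z * (Real.exp (-z^2)/(2*z)) * Real.exp (z^2) = 1/2 := by
      rw [Real.exp_neg]
      have := (Real.exp_pos (z^2)).ne'
      field_simp
    calc z * erfc z * Real.exp (z^2) ≤ z * (Real.exp (-z^2)/(2*z)) * Real.exp (z^2) := by
          have h := erfc_le hz
          gcongr
      _ = 1/2 := key

lemma aux_sqrt_inv_atTop : Tendsto (fun ε : ℝ => Real.sqrt ε⁻¹) (𝓝[>] (0:ℝ)) atTop := by
  have h1 : Tendsto Real.sqrt atTop atTop :=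
    (tendsto_rpow_atTop one_half_pos).congr (fun y => (Real.sqrt_eq_rpow y).symm)
  exact h1.comp tendsto_inv_nhdsGT_zero

lemma aux_sqrt_exp_zero {k : ℝ} (hk : 0 < k) :
    Tendsto (fun ε : ℝ => Real.sqrt ε⁻¹ * Real.exp (-(k * ε⁻¹))) (𝓝[>] (0:ℝ)) (𝓝 0) := by
  have h1 : Tendsto (fun y : ℝ => y ^ (1/2:ℝ) * Real.exp (-k * y)) atTop (𝓝 0) :=
    tendsto_rpow_mul_exp_neg_mul_atTop_nhds_zero _ k hk
  have h2 := h1.comp tendsto_inv_nhdsGT_zero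
  apply h2.congr
  intro ε
  simp [Function.comp, Real.sqrt_eq_rpow, neg_mul]

lemma key_div {X Y N D Q : ℝ} (hQ : Q ≠ 0) (h1 : X = N*Q) (h2 : Y = D*Q) : X/Y = N/D := by
  subst h1; subst h2
  rcases eq_or_ne D 0 with h|h
  · simp [h]
  · field_simp

set_option maxHeartbeats 1600000 in
theorem viscous_limit_region_b_d (a b u_a u_b t x : ℝ)
    (hab : a < b) (hua : u_a < 0) (hub : 0 < u_b) (ht : 0 < t) (hbx : b < x) :
    (x < b + Real.sqrt (2 * u_b * t) →
      Filter.Tendsto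
        (fun ε : ℝ =>
          ((x - a) / (2 * t) *
            ((Real.exp (u_a / ε) - 1) /
                ((x - a) / Real.sqrt (2 * t * ε) *
                  Real.exp (((x - a) / Real.sqrt (2 * t * ε)) ^ 2 - u_b / ε)) +
              (x - b) / (x - a) *
                ((1 - Real.exp (-u_b / ε)) /
                  ((x - b) / Real.sqrt (2 * t * ε) *
                    Real.exp (((x - b) / Real.sqrt (2 * t * ε)) ^ 2 - u_b / ε))))) /
          (Real.sqrt Real.pi
            + erfc ((x - a) / Real.sqrt (2 * t * ε)) * Real.exp (u_b / ε) *
                (Real.exp (u_a / ε) - 1)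
            + erfc ((x - b) / Real.sqrt (2 * t * ε)) * Real.exp (u_b / ε) *
                (1 - Real.exp (-u_b / ε))))
        (nhdsWithin 0 (Set.Ioi 0)) (nhds ((x - b) / t))) ∧
    (b + Real.sqrt (2 * u_b * t) < x →
      Filter.Tendsto
        (fun ε : ℝ =>
          ((x - a) / (2 * t) *
            ((Real.exp (u_a / ε) - 1) /
                ((x - a) / Real.sqrt (2 * t * ε) *
                  Real.exp (((x - a) / Real.sqrt (2 * t * ε)) ^ 2 - u_b / ε)) +
              (x - b) / (x - a) *
                ((1 - Real.exp (-u_b / ε)) /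
                  ((x - b) / Real.sqrt (2 * t * ε) *
                    Real.exp (((x - b) / Real.sqrt (2 * t * ε)) ^ 2 - u_b / ε))))) /
          (Real.sqrt Real.pi
            + erfc ((x - a) / Real.sqrt (2 * t * ε)) * Real.exp (u_b / ε) *
                (Real.exp (u_a / ε) - 1)
            + erfc ((x - b) / Real.sqrt (2 * t * ε)) * Real.exp (u_b / ε) *
                (1 - Real.exp (-u_b / ε))))
        (nhdsWithin 0 (Set.Ioi 0)) (nhds 0)) := by
  have hxa : (0:ℝ) < x - a := by linarith
  have hxb : (0:ℝ) < x - b := by linarith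
  have ht2 : (0:ℝ) < 2*t := by linarith
  have hst : (0:ℝ) < Real.sqrt (2*t) := Real.sqrt_pos.mpr ht2
  set l := nhdsWithin (0:ℝ) (Set.Ioi 0) with hldef
  have hev : ∀ᶠ ε in l, (0:ℝ) < ε := self_mem_nhdsWithin
  have hinv : Tendsto (fun ε : ℝ => ε⁻¹) l atTop := tendsto_inv_nhdsGT_zero
  have hsfacts : ∀ ε : ℝ, 0 < ε →
      0 < Real.sqrt (2*t*ε) ∧ (Real.sqrt (2*t*ε))^2 = 2*t*ε := fun ε hε =>
    ⟨Real.sqrt_pos.mpr (by positivity), Real.sq_sqrt (by positivity)⟩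
  -- A and B tend to atTop
  have hAB : ∀ c : ℝ, 0 < c → Tendsto (fun ε : ℝ => c/Real.sqrt (2*t*ε)) l atTop := by
    intro c hc
    have h2 : Tendsto (fun ε : ℝ => (c/Real.sqrt (2*t)) * Real.sqrt ε⁻¹) l atTop :=
      aux_sqrt_inv_atTop.const_mul_atTop (by positivity)
    apply Tendsto.congr' _ h2
    filter_upwards [hev] with ε hε
    have h3 : Real.sqrt ε ≠ 0 := (Real.sqrt_pos.mpr hε).ne'
    rw [Real.sqrt_inv, Real.sqrt_mul ht2.le]
    field_simp
  have hA := hAB (x-a) hxa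
  have hB := hAB (x-b) hxb
  have hcA : Tendsto (fun ε : ℝ => (x-a)/Real.sqrt (2*t*ε) * erfc ((x-a)/Real.sqrt (2*t*ε)) *
      Real.exp (((x-a)/Real.sqrt (2*t*ε))^2)) l (𝓝 (1/2:ℝ)) := by
    exact erfc_asymp.comp hA
  have hcB : Tendsto (fun ε : ℝ => (x-b)/Real.sqrt (2*t*ε) * erfc ((x-b)/Real.sqrt (2*t*ε)) *
      Real.exp (((x-b)/Real.sqrt (2*t*ε))^2)) l (𝓝 (1/2:ℝ)) := by
    exact erfc_asymp.comp hB
  have hEa : Tendsto (fun ε : ℝ => Real.exp (u_a/ε)) l (𝓝 0) := by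
    have h1 : Tendsto (fun ε : ℝ => u_a * ε⁻¹) l atBot := hinv.const_mul_atTop_of_neg hua
    have h2 := Real.tendsto_exp_atBot.comp h1
    apply h2.congr
    intro ε; simp [Function.comp, div_eq_mul_inv]
  have hEb : Tendsto (fun ε : ℝ => Real.exp (-u_b/ε)) l (𝓝 0) := by
    have h1 : Tendsto (fun ε : ℝ => -u_b * ε⁻¹) l atBot :=
      hinv.const_mul_atTop_of_neg (by linarith)
    have h2 := Real.tendsto_exp_atBot.comp h1
    apply h2.congr
    intro ε; simp [Function.comp, div_eq_mul_inv]
  constructor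
  · -- Case 1 : x < b + sqrt (2 u_b t)
    intro hx1
    have hsq : (x-b)^2 < 2*u_b*t := by
      have h0 : x - b < Real.sqrt (2*u_b*t) := by linarith
      nlinarith [Real.sq_sqrt (show (0:ℝ) ≤ 2*u_b*t by positivity)]
    have hk1 : 0 < (2*u_b*t - (x-b)^2)/(2*t) := div_pos (by linarith) ht2
    set m := ((x-a)^2-(x-b)^2)/(2*t) with hmdef
    have hm0 : 0 < m := div_pos (by nlinarith) ht2
    -- Q tends to 0
    have hQ0 : Tendsto (fun ε : ℝ => (x-b)/Real.sqrt (2*t*ε) *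
        Real.exp (((x-b)/Real.sqrt (2*t*ε))^2 - u_b/ε)) l (𝓝 0) := by
      have base := (aux_sqrt_exp_zero hk1).const_mul ((x-b)/Real.sqrt (2*t))
      rw [mul_zero] at base
      apply Tendsto.congr' _ base
      filter_upwards [hev] with ε hε
      obtain ⟨hs, hs2⟩ := hsfacts ε hε
      have hsne : Real.sqrt (2*t*ε) ≠ 0 := hs.ne'
      have hexp : -((2*u_b*t - (x-b)^2)/(2*t) * ε⁻¹)
          = ((x-b)/Real.sqrt (2*t*ε))^2 - u_b/ε := by
        rw [div_pow, hs2]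
        field_simp
        ring
      rw [hexp, Real.sqrt_mul ht2.le, Real.sqrt_inv]
      have h3 : Real.sqrt ε ≠ 0 := (Real.sqrt_pos.mpr hε).ne'
      rw [← mul_assoc]
      congr 1
      field_simp
    have hQP : Tendsto (fun ε : ℝ => Real.exp (-(m * ε⁻¹))) l (𝓝 0) :=
      Real.tendsto_exp_atBot.comp (tendsto_neg_atTop_atBot.comp (hinv.const_mul_atTop hm0))
    set r := (x-b)/(x-a) with hrdef
    have hGnum : Tendsto (fun ε : ℝ => (x-a)/(2*t) * ((Real.exp (u_a/ε) - 1) *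
        (r * Real.exp (-(m*ε⁻¹))) + r * (1 - Real.exp (-u_b/ε)))) l (𝓝 ((x-b)/(2*t))) := by
      have h1 := (((hEa.sub_const 1).mul (hQP.const_mul r)).add
        ((hEb.const_sub 1).const_mul r)).const_mul ((x-a)/(2*t))
      convert h1 using 1
      rw [hrdef]
      field_simp
      ring
    have hGden : Tendsto (fun ε : ℝ => Real.sqrt Real.pi *
        ((x-b)/Real.sqrt (2*t*ε) * Real.exp (((x-b)/Real.sqrt (2*t*ε))^2 - u_b/ε)) +
        ((x-a)/Real.sqrt (2*t*ε) * erfc ((x-a)/Real.sqrt (2*t*ε)) *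
          Real.exp (((x-a)/Real.sqrt (2*t*ε))^2)) * (r * Real.exp (-(m*ε⁻¹))) *
          (Real.exp (u_a/ε) - 1) +
        ((x-b)/Real.sqrt (2*t*ε) * erfc ((x-b)/Real.sqrt (2*t*ε)) *
          Real.exp (((x-b)/Real.sqrt (2*t*ε))^2)) * (1 - Real.exp (-u_b/ε))) l
        (𝓝 (1/2:ℝ)) := by
      have h1 := ((hQ0.const_mul (Real.sqrt Real.pi)).add
        (((hcA.mul (hQP.const_mul r)).mul (hEa.sub_const 1)))).add
        (hcB.mul (hEb.const_sub 1))
      convert h1 using 1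
      norm_num
    have hdiv := hGnum.div hGden (by norm_num : (1/2:ℝ) ≠ 0)
    have hval : (x-b)/(2*t) / (1/2:ℝ) = (x-b)/t := by
      field_simp
    rw [hval] at hdiv
    apply Tendsto.congr' _ hdiv
    filter_upwards [hev] with ε hε
    simp only [Pi.div_apply]
    obtain ⟨hs, hs2⟩ := hsfacts ε hε
    have hsne : Real.sqrt (2*t*ε) ≠ 0 := hs.ne'
    have hexpm : Real.exp (-(m*ε⁻¹)) = Real.exp (((x-b)/Real.sqrt (2*t*ε))^2) /
        Real.exp (((x-a)/Real.sqrt (2*t*ε))^2) := by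
      rw [← Real.exp_sub]
      congr 1
      rw [div_pow, div_pow, hs2, hmdef]
      field_simp
      ring
    rw [hexpm, Real.exp_sub, Real.exp_sub]
    set eA := Real.exp (((x-a)/Real.sqrt (2*t*ε))^2) with heA
    set eB := Real.exp (((x-b)/Real.sqrt (2*t*ε))^2) with heB
    set eU := Real.exp (u_b/ε) with heU
    have heAne : eA ≠ 0 := (Real.exp_pos _).ne'
    have heBne : eB ≠ 0 := (Real.exp_pos _).ne'
    have heUne : eU ≠ 0 := (Real.exp_pos _).ne'
    have hQne : (x-b)/Real.sqrt (2*t*ε) * (eB/eU) ≠ 0 := by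
      apply ne_of_gt
      exact mul_pos (div_pos hxb hs) (div_pos (Real.exp_pos _) (Real.exp_pos _))
    apply key_div hQne
    · rw [hrdef]
      field_simp
    · rw [hrdef]
      field_simp
  · -- Case 2 : b + sqrt (2 u_b t) < x
    intro hx2
    have hsq : 2*u_b*t < (x-b)^2 := by
      have h0 : Real.sqrt (2*u_b*t) < x - b := by linarith
      nlinarith [Real.sq_sqrt (show (0:ℝ) ≤ 2*u_b*t by positivity),
        Real.sqrt_nonneg (2*u_b*t)]
    have hkB : 0 < ((x-b)^2 - 2*u_b*t)/(2*t) := div_pos (by linarith) ht2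
    have hkA : 0 < ((x-a)^2 - 2*u_b*t)/(2*t) := by
      apply div_pos _ ht2
      nlinarith
    have hexpgen : ∀ c ε : ℝ, 0 < ε →
        (c/Real.sqrt (2*t*ε))^2 - u_b/ε = ((c^2 - 2*u_b*t)/(2*t)) * ε⁻¹ := by
      intro c ε hε
      obtain ⟨hs, hs2⟩ := hsfacts ε hε
      rw [div_pow, hs2]
      field_simp
    have hPQinv : ∀ c : ℝ, 0 < c → 0 < ((c^2 - 2*u_b*t)/(2*t)) →
        Tendsto (fun ε : ℝ => (c/Real.sqrt (2*t*ε) * Real.exp ((c/Real.sqrt (2*t*ε))^2 - u_b/ε))⁻¹)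
          l (𝓝 0) := by
      intro c hc hk
      have h1 : Tendsto (fun ε : ℝ => (c/Real.sqrt (2*t)) * Real.sqrt ε⁻¹ *
          Real.exp (((c^2 - 2*u_b*t)/(2*t)) * ε⁻¹)) l atTop := by
        apply Filter.Tendsto.atTop_mul_atTop₀
          (aux_sqrt_inv_atTop.const_mul_atTop (show (0:ℝ) < c/Real.sqrt (2*t) by positivity))
        exact Real.tendsto_exp_atTop.comp (hinv.const_mul_atTop hk)
      have h2 : Tendsto (fun ε : ℝ => c/Real.sqrt (2*t*ε) *
          Real.exp ((c/Real.sqrt (2*t*ε))^2 - u_b/ε)) l atTop := by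
        apply Tendsto.congr' _ h1
        filter_upwards [hev] with ε hε
        rw [hexpgen c ε hε, Real.sqrt_inv, Real.sqrt_mul ht2.le]
        have h3 : Real.sqrt ε ≠ 0 := (Real.sqrt_pos.mpr hε).ne'
        congr 1
        field_simp
      exact h2.inv_tendsto_atTop
    have hPinv := hPQinv (x-a) hxa hkA
    have hQinv := hPQinv (x-b) hxb hkB
    have hN2 : Tendsto (fun ε : ℝ => (x-a)/(2*t) * ((Real.exp (u_a/ε) - 1) *
        ((x-a)/Real.sqrt (2*t*ε) * Real.exp (((x-a)/Real.sqrt (2*t*ε))^2 - u_b/ε))⁻¹ +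
        (x-b)/(x-a) * ((1 - Real.exp (-u_b/ε)) *
        ((x-b)/Real.sqrt (2*t*ε) * Real.exp (((x-b)/Real.sqrt (2*t*ε))^2 - u_b/ε))⁻¹))) l
        (𝓝 0) := by
      have h1 := (((hEa.sub_const 1).mul hPinv).add
        (((hEb.const_sub 1).mul hQinv).const_mul ((x-b)/(x-a)))).const_mul ((x-a)/(2*t))
      convert h1 using 1
      norm_num
    have hD2 : Tendsto (fun ε : ℝ => Real.sqrt Real.pi +
        ((x-a)/Real.sqrt (2*t*ε) * erfc ((x-a)/Real.sqrt (2*t*ε)) *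
          Real.exp (((x-a)/Real.sqrt (2*t*ε))^2)) *
        ((x-a)/Real.sqrt (2*t*ε) * Real.exp (((x-a)/Real.sqrt (2*t*ε))^2 - u_b/ε))⁻¹ *
          (Real.exp (u_a/ε) - 1) +
        ((x-b)/Real.sqrt (2*t*ε) * erfc ((x-b)/Real.sqrt (2*t*ε)) *
          Real.exp (((x-b)/Real.sqrt (2*t*ε))^2)) *
        ((x-b)/Real.sqrt (2*t*ε) * Real.exp (((x-b)/Real.sqrt (2*t*ε))^2 - u_b/ε))⁻¹ *
          (1 - Real.exp (-u_b/ε))) l (𝓝 (Real.sqrt Real.pi)) := by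
      have h1 := ((tendsto_const_nhds (x := Real.sqrt Real.pi)).add
        ((hcA.mul hPinv).mul (hEa.sub_const 1))).add ((hcB.mul hQinv).mul (hEb.const_sub 1))
      convert h1 using 1
      norm_num
    have hdiv := hN2.div hD2 (ne_of_gt (Real.sqrt_pos.mpr Real.pi_pos))
    rw [zero_div] at hdiv
    apply Tendsto.congr' _ hdiv
    filter_upwards [hev] with ε hε
    simp only [Pi.div_apply]
    obtain ⟨hs, hs2⟩ := hsfacts ε hε
    have hsne : Real.sqrt (2*t*ε) ≠ 0 := hs.ne'
    rw [Real.exp_sub, Real.exp_sub]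
    set eA := Real.exp (((x-a)/Real.sqrt (2*t*ε))^2) with heA
    set eB := Real.exp (((x-b)/Real.sqrt (2*t*ε))^2) with heB
    set eU := Real.exp (u_b/ε) with heU
    have heAne : eA ≠ 0 := (Real.exp_pos _).ne'
    have heBne : eB ≠ 0 := (Real.exp_pos _).ne'
    have heUne : eU ≠ 0 := (Real.exp_pos _).ne'
    congr 1
    · field_simp
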